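/- Let m ≥ 2 be even and k₁, k₂ integers, and suppose A ⊆ ℤ_m satisfies |A| = m/2 and A is uniformly distributed modulo d₁d₂/d₃², where d₁ = gcd(k₁,m), d₂ = gcd(k₂,m), d₃ = gcd(d₁,d₂). Then r̂_{k₁,k₂}(A,n) = r̂_{k₁,k₂}(ℤ_m \ A, n) for all n ∈ ℤ_m. -/

import Mathlib

def rhat (m : ℕ) (k1 k2 : ℤ) (A : Finset (ZMod m)) (n : ZMod m) : ℕ :=
  ((A ×ˢ A).filter (fun p => (k1 : ZMod m) * p.1 + (k2 : ZMod m) * p.2 = n)).card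

def unif (m d : ℕ) (A : Finset (ZMod m)) : Prop :=
  ∀ u : ℤ, (A.filter (fun a => (d : ℤ) ∣ (a.val : ℤ) - u)).card * d = A.card

open Finset

lemma classCount (m : ℕ) [NeZero m] (e : ℕ) (he : e ∣ m) (u : ℤ) :
    ((univ : Finset (ZMod m)).filter (fun x => (e:ℤ) ∣ (x.val:ℤ) - u)).card * e = m := by
  have hm : m ≠ 0 := NeZero.ne m
  have he0 : e ≠ 0 := by rintro rfl; exact hm (zero_dvd_iff.mp he)
  have he0' : 0 < e := Nat.pos_of_ne_zero he0
  set r : ℕ := (u % e).toNat with hr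
  have hre : (r : ℤ) = u % e := Int.toNat_of_nonneg (Int.emod_nonneg u (by exact_mod_cast he0))
  have hrlt : r < e := by
    have := Int.emod_lt_of_pos u (b := e) (by exact_mod_cast he0')
    omega
  have key : ∀ x : ZMod m, ((e:ℤ) ∣ (x.val:ℤ) - u) ↔ x.val % e = r := by
    intro x
    rw [Int.dvd_iff_emod_eq_zero, ← Int.emod_eq_emod_iff_emod_sub_eq_zero]
    constructor
    · intro h
      have : ((x.val % e : ℕ) : ℤ) = (r : ℤ) := by push_cast; rw [hre] at *; exact h
      exact_mod_cast this
    · intro h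
      rw [← hre, ← h]; push_cast; ring
  have hlt : ∀ j, j < m/e → r + j*e < m := by
    intro j hj
    have : (j+1)*e ≤ m := by
      calc (j+1)*e ≤ (m/e)*e := Nat.mul_le_mul_right e hj
      _ = m := Nat.div_mul_cancel he
    nlinarith
  have hcard : ((univ : Finset (ZMod m)).filter (fun x => (e:ℤ) ∣ (x.val:ℤ) - u)).card = m / e := by
    symm
    rw [← Finset.card_range (m/e)]
    apply Finset.card_bij (fun j _ => ((r + j*e : ℕ) : ZMod m))
    · intro j hj
      simp only [mem_range] at hj
      simp only [mem_filter, mem_univ, true_and]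
      rw [key, ZMod.val_cast_of_lt (hlt j hj)]
      simp [Nat.add_mul_mod_self_right, Nat.mod_eq_of_lt hrlt]
    · intro j1 h1 j2 h2 hEq
      simp only [mem_range] at h1 h2
      have h3 := ZMod.val_cast_of_lt (n := m) (hlt j1 h1)
      have h4 := ZMod.val_cast_of_lt (n := m) (hlt j2 h2)
      have h5 : r + j1*e = r + j2*e := by rw [← h3, ← h4, hEq]
      exact Nat.eq_of_mul_eq_mul_right he0' (Nat.add_left_cancel h5)
    · intro x hx
      simp only [mem_filter, mem_univ, true_and] at hx
      rw [key] at hx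
      refine ⟨x.val / e, ?_, ?_⟩
      · simp only [mem_range]
        by_contra hc
        push_neg at hc
        have : m ≤ x.val := by
          calc m = (m/e)*e := (Nat.div_mul_cancel he).symm
          _ ≤ (x.val/e)*e := Nat.mul_le_mul_right e hc
          _ ≤ x.val := Nat.div_mul_le_self _ _
        exact absurd (ZMod.val_lt x) (by omega)
      · have h5 := Nat.div_add_mod' x.val e
        rw [hx] at h5
        have h6 : r + x.val/e*e = x.val := (Nat.add_comm _ _).trans h5
        rw [h6, ZMod.natCast_val, ZMod.cast_id]
  rw [hcard, Nat.div_mul_cancel he]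

lemma unif_dvd (m : ℕ) (D e : ℕ) (A : Finset (ZMod m)) (hA0 : A.card ≠ 0)
    (hu : unif m D A) (he : e ∣ D) : unif m e A := by
  have hD0 : D ≠ 0 := by
    rintro rfl
    exact hA0 ((hu 0).symm.trans (mul_zero _))
  have he0 : e ≠ 0 := by rintro rfl; exact hD0 (zero_dvd_iff.mp he)
  set q := D / e with hqdef
  have hq : e * q = D := Nat.mul_div_cancel' he
  have hq0 : q ≠ 0 := by intro h0; apply hD0; rw [← hq, h0, mul_zero]
  intro u
  have hset : A.filter (fun a => (e:ℤ) ∣ (a.val:ℤ) - u)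
      = (range q).biUnion (fun j => A.filter (fun a => (D:ℤ) ∣ (a.val:ℤ) - (u + j*e))) := by
    ext a
    simp only [mem_biUnion, mem_filter, mem_range]
    constructor
    · rintro ⟨ha, s, hs⟩
      have hq0' : (0:ℤ) < q := by exact_mod_cast Nat.pos_of_ne_zero hq0
      refine ⟨(s % q).toNat, ?_, ha, ?_⟩
      · have h1 := Int.emod_lt_of_pos s hq0'
        have h2 := Int.emod_nonneg s (by omega : (q:ℤ) ≠ 0)
        omega
      · have h2 := Int.emod_nonneg s (by positivity : (q:ℤ) ≠ 0)
        have htn : ((s % q).toNat : ℤ) = s % q := Int.toNat_of_nonneg h2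
        have hdvd : (q:ℤ) ∣ s - (s % q).toNat := by
          rw [htn]
          exact Int.dvd_self_sub_of_emod_eq rfl
        obtain ⟨t, ht⟩ := hdvd
        refine ⟨t, ?_⟩
        have : (a.val:ℤ) - (u + (s % q).toNat * e) = e * s - (s % q).toNat * e := by omega
        rw [this]
        push_cast [← hq]
        nlinarith [ht]
    · rintro ⟨j, hj, ha, t, ht⟩
      refine ⟨ha, j + q * t, ?_⟩
      have : (a.val:ℤ) - u = ((a.val:ℤ) - (u + j*e)) + j*e := by ring
      rw [this, ht]
      push_cast [← hq]
      ring
  rw [hset, Finset.card_biUnion]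
  · have hc : ∀ j, (A.filter (fun a => (D:ℤ) ∣ (a.val:ℤ) - (u + j*e))).card = A.card / D := by
      intro j
      exact (Nat.div_eq_of_eq_mul_left (Nat.pos_of_ne_zero hD0) (hu (u + j*e)).symm).symm
    simp only [hc, Finset.sum_const, Finset.card_range, smul_eq_mul]
    have h1 : A.card / D * D = A.card := by
      have h2 := (Nat.div_eq_of_eq_mul_left (Nat.pos_of_ne_zero hD0) (hu 0).symm)
      rw [h2]; exact hu 0
    calc q * (A.card / D) * e = A.card / D * (e * q) := by ring
    _ = A.card := by rw [hq]; exact h1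
  · intro j1 h1 j2 h2 hne
    simp only [mem_coe, mem_range, Function.onFun] at h1 h2 ⊢
    rw [Finset.disjoint_left]
    intro a ha1 ha2
    simp only [mem_filter] at ha1 ha2
    obtain ⟨-, t1, ht1⟩ := ha1
    obtain ⟨-, t2, ht2⟩ := ha2
    apply hne
    have hd : (j2:ℤ)*e - j1*e = (e*q : ℕ) * (t1 - t2) := by rw [hq]; linear_combination ht1 - ht2
    have : (q:ℤ) ∣ (j2:ℤ) - j1 := by
      refine ⟨(t1 - t2), ?_⟩
      have he0' : (e:ℤ) ≠ 0 := by exact_mod_cast he0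
      have : ((j2:ℤ) - j1) * e = (q * (t1 - t2)) * e := by push_cast at hd ⊢; linear_combination hd
      exact mul_right_cancel₀ he0' this
    have hz : (j2:ℤ) - j1 = 0 := by
      apply Int.eq_zero_of_abs_lt_dvd this
      rw [abs_sub_lt_iff]
      omega
    omega

lemma dvd_mul_iff_div_gcd (m : ℕ) (hm : m ≠ 0) (k Δ : ℤ) :
    (m:ℤ) ∣ k * Δ ↔ ((m / Int.gcd k m : ℕ) : ℤ) ∣ Δ := by
  set d : ℕ := Int.gcd k m with hd
  have hd0 : d ≠ 0 := by
    simp only [hd, ne_eq, Int.gcd_eq_zero_iff]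
    intro ⟨h1, h2⟩
    exact hm (by exact_mod_cast h2)
  have hdk : (d:ℤ) ∣ k := Int.gcd_dvd_left _ _
  have hdm : (d:ℤ) ∣ (m:ℤ) := Int.gcd_dvd_right _ _
  have hdmn : d ∣ m := by exact_mod_cast hdm
  have hmd : ((m / d : ℕ) : ℤ) = (m:ℤ) / d := by norm_cast
  have hcop : Int.gcd (k / d) ((m:ℤ) / d) = 1 :=
    Int.gcd_div_gcd_div_gcd (Nat.pos_of_ne_zero hd0)
  have hk : (d:ℤ) * (k / d) = k := Int.mul_ediv_cancel' hdk
  have hmm : (d:ℤ) * ((m:ℤ) / d) = m := Int.mul_ediv_cancel' hdm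
  rw [hmd]
  constructor
  · intro h
    have h2 : (d:ℤ) * ((m:ℤ)/d) ∣ (d:ℤ) * ((k/d) * Δ) := by
      rw [hmm]
      have : k * Δ = (d:ℤ) * ((k/d) * Δ) := by linear_combination Δ * hk.symm
      rw [← this]; exact h
    have h3 : ((m:ℤ)/d) ∣ (k/d) * Δ :=
      (mul_dvd_mul_iff_left (by exact_mod_cast hd0 : (d:ℤ) ≠ 0)).mp h2
    exact (Int.isCoprime_iff_gcd_eq_one.mpr (by rw [Int.gcd_comm] at hcop; exact hcop)).dvd_of_dvd_mul_left h3
  · intro h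
    calc (m:ℤ) = d * ((m:ℤ)/d) := hmm.symm
    _ ∣ d * ((k/d) * Δ) := mul_dvd_mul_left _ (Dvd.dvd.mul_left h _)
    _ = k * Δ := by linear_combination Δ * hk

lemma fiberCount (m : ℕ) [NeZero m] (k : ℤ) (w x0 : ZMod m) (h0 : (k:ZMod m) * x0 = w) :
    ((univ : Finset (ZMod m)).filter (fun x => (k:ZMod m)*x = w)).card = Int.gcd k m := by
  have hm : m ≠ 0 := NeZero.ne m
  set d : ℕ := Int.gcd k m with hd
  have hd0 : d ≠ 0 := by
    simp only [hd, ne_eq, Int.gcd_eq_zero_iff]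
    intro ⟨h1, h2⟩
    exact hm (by exact_mod_cast h2)
  have hdm : d ∣ m := by exact_mod_cast (Int.gcd_dvd_right k m : (d:ℤ) ∣ (m:ℤ))
  have key : ∀ x : ZMod m, ((k:ZMod m)*x = w) ↔ ((m/d : ℕ):ℤ) ∣ (x.val:ℤ) - (x0.val:ℤ) := by
    intro x
    rw [← h0]
    constructor
    · intro h
      have h2 : (k:ZMod m) * (((x.val:ℤ) - x0.val : ℤ) : ZMod m) = 0 := by
        push_cast
        rw [ZMod.natCast_val, ZMod.natCast_val, ZMod.cast_id, ZMod.cast_id]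
        rw [mul_sub, h, sub_self]
      rw [← Int.cast_mul, ZMod.intCast_zmod_eq_zero_iff_dvd] at h2
      exact (dvd_mul_iff_div_gcd m hm k _).mp h2
    · intro h
      have h2 : (m:ℤ) ∣ k * ((x.val:ℤ) - x0.val) := (dvd_mul_iff_div_gcd m hm k _).mpr h
      have h3 : ((k * ((x.val:ℤ) - x0.val) : ℤ) : ZMod m) = 0 :=
        (ZMod.intCast_zmod_eq_zero_iff_dvd _ _).mpr h2
      push_cast at h3
      rw [ZMod.natCast_val, ZMod.natCast_val, ZMod.cast_id, ZMod.cast_id] at h3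
      rw [mul_sub, sub_eq_zero] at h3
      exact h3
  have hfilter : (univ : Finset (ZMod m)).filter (fun x => (k:ZMod m)*x = w)
      = (univ : Finset (ZMod m)).filter (fun x => ((m/d : ℕ):ℤ) ∣ (x.val:ℤ) - (x0.val:ℤ)) := by
    ext x; simp [key x]
  rw [hfilter]
  have hcc := classCount m (m/d) (Nat.div_dvd_of_dvd hdm) (x0.val:ℤ)
  have hmd : m / d * d = m := Nat.div_mul_cancel hdm
  have hmd0 : m / d ≠ 0 := by
    intro h0
    rw [h0, Nat.mul_zero] at hcc
    exact hm hcc.symm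
  exact Nat.eq_of_mul_eq_mul_right (Nat.pos_of_ne_zero hmd0)
    (hcc.trans (Nat.mul_div_cancel' hdm).symm)

lemma solvable_iff (m : ℕ) [NeZero m] (k1 k2 : ℤ) (d2 d3 : ℕ)
    (hd2 : d2 = Int.gcd k2 m) (hd3 : d3 = Int.gcd k1 (d2:ℤ))
    (n x0 y0 : ZMod m) (hsol : (k1:ZMod m)*x0 + (k2:ZMod m)*y0 = n) (a : ZMod m) :
    (∃ b : ZMod m, (k1:ZMod m)*a + (k2:ZMod m)*b = n)
      ↔ ((d2/d3 : ℕ):ℤ) ∣ (a.val:ℤ) - (x0.val:ℤ) := by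
  have hm : m ≠ 0 := NeZero.ne m
  have hd20 : d2 ≠ 0 := by
    simp only [hd2, ne_eq, Int.gcd_eq_zero_iff]
    intro ⟨h1, h2⟩; exact hm (by exact_mod_cast h2)
  have hd32 : (d3:ℤ) ∣ (d2:ℤ) := hd3 ▸ Int.gcd_dvd_right k1 (d2:ℤ)
  have hd32n : d3 ∣ d2 := by exact_mod_cast hd32
  have hd30 : d3 ≠ 0 := by rintro rfl; exact hd20 (zero_dvd_iff.mp hd32n)
  set e2 : ℕ := d2 / d3 with he2
  have hd2e : d2 = d3 * e2 := (Nat.mul_div_cancel' hd32n).symm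
  have hdk1 : (d3:ℤ) ∣ k1 := hd3 ▸ Int.gcd_dvd_left k1 (d2:ℤ)
  have hk13 : (d3:ℤ) * (k1 / d3) = k1 := Int.mul_ediv_cancel' hdk1
  have hcop : IsCoprime ((e2:ℕ):ℤ) (k1 / d3) := by
    have hpos : 0 < Int.gcd k1 (d2:ℤ) := Nat.pos_of_ne_zero (by rw [← hd3]; exact hd30)
    have h1 : Int.gcd (k1 / (Int.gcd k1 (d2:ℤ))) ((d2:ℤ) / (Int.gcd k1 (d2:ℤ))) = 1 :=
      Int.gcd_div_gcd_div_gcd hpos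
    rw [← hd3] at h1
    have h2 : ((e2:ℕ):ℤ) = (d2:ℤ) / (d3:ℤ) := by norm_cast
    rw [h2, Int.isCoprime_iff_gcd_eq_one, Int.gcd_comm]
    exact h1
  constructor
  · rintro ⟨b, hb⟩
    have hcast : (((k1*((a.val:ℤ) - x0.val) + k2*((b.val:ℤ) - y0.val)) : ℤ) : ZMod m) = 0 := by
      push_cast
      simp only [ZMod.natCast_val, ZMod.cast_id]
      linear_combination hb - hsol
    rw [ZMod.intCast_zmod_eq_zero_iff_dvd] at hcast
    have hd2m : (d2:ℤ) ∣ (m:ℤ) := hd2 ▸ Int.gcd_dvd_right k2 (m:ℤ)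
    have hd2k2 : (d2:ℤ) ∣ k2 := hd2 ▸ Int.gcd_dvd_left k2 (m:ℤ)
    have h1 : (d2:ℤ) ∣ k1 * ((a.val:ℤ) - x0.val) := by
      have h0 := dvd_sub (dvd_trans hd2m hcast) (Dvd.dvd.mul_right hd2k2 ((b.val:ℤ) - y0.val))
      simpa using h0
    have h2 : ((d3:ℤ)*(e2:ℤ)) ∣ ((d3:ℤ)*((k1/d3) * ((a.val:ℤ) - x0.val))) := by
      have h2' : ((d3*e2 : ℕ):ℤ) ∣ k1 * ((a.val:ℤ) - x0.val) := by rw [← hd2e]; exact h1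
      push_cast at h2'
      rw [← mul_assoc, hk13]
      exact h2'
    have h3 : (e2:ℤ) ∣ (k1/d3) * ((a.val:ℤ) - x0.val) :=
      (mul_dvd_mul_iff_left (by exact_mod_cast hd30 : (d3:ℤ) ≠ 0)).mp h2
    exact hcop.dvd_of_dvd_mul_left h3
  · rintro ⟨s, hs⟩
    set u : ℤ := Int.gcdA k2 m with hu
    set v : ℤ := Int.gcdB k2 m with hv
    have hbez : (d2:ℤ) = k2*u + m*v := by rw [hd2]; exact Int.gcd_eq_gcd_ab k2 m
    have hintid : k1*((e2:ℤ)*s) - k2*((k1/d3)*u*s) = m * ((k1/d3)*v*s) := by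
      have hd2e' : (d2:ℤ) = (d3:ℤ) * e2 := by exact_mod_cast hd2e
      linear_combination (s*(k1/d3)) * hbez - (s*(k1/d3)) * hd2e' - (s*(e2:ℤ)) * hk13
    refine ⟨y0 - (((k1/d3)*u*s : ℤ) : ZMod m), ?_⟩
    have hsub : (a : ZMod m) = x0 + ((e2:ℤ) * s : ℤ) := by
      have h0 : (((a.val:ℤ) - x0.val : ℤ) : ZMod m) = (((e2:ℤ)*s : ℤ) : ZMod m) := by rw [hs]
      push_cast at h0 ⊢
      simp only [ZMod.natCast_val, ZMod.cast_id] at h0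
      linear_combination h0
    have hc2 : ((k1*((e2:ℤ)*s) - k2*((k1/d3)*u*s) : ℤ) : ZMod m) = 0 := by
      rw [hintid]
      push_cast
      simp [ZMod.natCast_self]
    push_cast at hc2 hsub ⊢
    linear_combination hsol + (k1:ZMod m) * hsub + hc2

lemma sumFib (m : ℕ) [NeZero m] (k1 k2 : ℤ) (d2 d3 : ℕ)
    (hd2 : d2 = Int.gcd k2 m) (hd3 : d3 = Int.gcd k1 (d2:ℤ))
    (n x0 y0 : ZMod m) (hsol : (k1:ZMod m)*x0 + (k2:ZMod m)*y0 = n)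
    (A : Finset (ZMod m)) (hA0 : A.card ≠ 0) (D : ℕ) (hD : (d2/d3) ∣ D) (hu : unif m D A) :
    (∑ a ∈ A, ((univ : Finset (ZMod m)).filter
        (fun b => (k1:ZMod m)*a + (k2:ZMod m)*b = n)).card) = d3 * A.card := by
  have hm : m ≠ 0 := NeZero.ne m
  have hd20 : d2 ≠ 0 := by
    simp only [hd2, ne_eq, Int.gcd_eq_zero_iff]
    intro ⟨h1, h2⟩; exact hm (by exact_mod_cast h2)
  have hd32 : (d3:ℤ) ∣ (d2:ℤ) := hd3 ▸ Int.gcd_dvd_right k1 (d2:ℤ)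
  have hd32n : d3 ∣ d2 := by exact_mod_cast hd32
  set e2 : ℕ := d2 / d3 with he2
  have hd2e : d2 = d3 * e2 := (Nat.mul_div_cancel' hd32n).symm
  have huA := unif_dvd m D e2 A hA0 hu hD
  have hfib : ∀ a : ZMod m, ((univ : Finset (ZMod m)).filter
      (fun b => (k1:ZMod m)*a + (k2:ZMod m)*b = n)).card
      = if ((e2:ℕ):ℤ) ∣ (a.val:ℤ) - (x0.val:ℤ) then d2 else 0 := by
    intro a
    by_cases h : ((e2:ℕ):ℤ) ∣ (a.val:ℤ) - (x0.val:ℤ)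
    · rw [if_pos h]
      obtain ⟨b, hb⟩ := (solvable_iff m k1 k2 d2 d3 hd2 hd3 n x0 y0 hsol a).mpr h
      have hfe : ((univ : Finset (ZMod m)).filter (fun b => (k1:ZMod m)*a + (k2:ZMod m)*b = n))
          = (univ : Finset (ZMod m)).filter (fun x => (k2:ZMod m)*x = n - (k1:ZMod m)*a) := by
        ext x
        simp only [mem_filter, mem_univ, true_and]
        constructor
        · intro hx; linear_combination hx
        · intro hx; linear_combination hx
      rw [hfe, fiberCount m k2 _ b (by linear_combination hb), hd2]
    · rw [if_neg h]
      rw [Finset.card_eq_zero, Finset.filter_eq_empty_iff]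
      exact fun b _ hb => h ((solvable_iff m k1 k2 d2 d3 hd2 hd3 n x0 y0 hsol a).mp ⟨b, hb⟩)
  rw [Finset.sum_congr rfl (fun a _ => hfib a), ← Finset.sum_filter, Finset.sum_const, smul_eq_mul]
  rw [hd2e, ← huA (x0.val:ℤ)]
  ring

lemma gcd3 (a b m : ℕ) : Nat.gcd (Nat.gcd a m) (Nat.gcd b m) = Nat.gcd a (Nat.gcd b m) := by
  apply Nat.dvd_antisymm
  · exact Nat.dvd_gcd (dvd_trans (Nat.gcd_dvd_left _ _) (Nat.gcd_dvd_left a m))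
      (Nat.gcd_dvd_right _ _)
  · refine Nat.dvd_gcd (Nat.dvd_gcd (Nat.gcd_dvd_left _ _) ?_) (Nat.gcd_dvd_right _ _)
    exact dvd_trans (Nat.gcd_dvd_right _ _) (Nat.gcd_dvd_right b m)

lemma intGcdNat (k : ℤ) (d : ℕ) : Int.gcd k (d:ℤ) = Nat.gcd k.natAbs d := by
  rw [Int.gcd]; simp

theorem stmt19 (m : ℕ) [NeZero m] (hm : 2 ≤ m) (hme : Even m) (k1 k2 : ℤ)
    (d1 d2 d3 : ℕ) (hd1 : d1 = Int.gcd k1 m) (hd2 : d2 = Int.gcd k2 m) (hd3 : d3 = Nat.gcd d1 d2)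
    (A : Finset (ZMod m)) (hA : 2 * A.card = m) (hu : unif m (d1 * d2 / (d3 * d3)) A) :
    ∀ n : ZMod m, rhat m k1 k2 A n = rhat m k1 k2 Aᶜ n := by
  intro n
  have hm0 : m ≠ 0 := NeZero.ne m
  have hA0 : A.card ≠ 0 := by omega
  -- gcd facts
  have hd3' : d3 = Int.gcd k1 (d2:ℤ) := by
    rw [intGcdNat, hd3, hd1, hd2, Int.gcd, Int.gcd]
    exact gcd3 _ _ _
  have hd3'' : d3 = Int.gcd k2 (d1:ℤ) := by
    rw [intGcdNat, hd3, hd1, hd2, Int.gcd, Int.gcd, Nat.gcd_comm (k1.natAbs.gcd ((m:ℤ)).natAbs)]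
    exact gcd3 _ _ _
  have hd10 : d1 ≠ 0 := by
    simp only [hd1, ne_eq, Int.gcd_eq_zero_iff]
    intro ⟨h1, h2⟩; exact hm0 (by exact_mod_cast h2)
  have hd20 : d2 ≠ 0 := by
    simp only [hd2, ne_eq, Int.gcd_eq_zero_iff]
    intro ⟨h1, h2⟩; exact hm0 (by exact_mod_cast h2)
  have hd31 : d3 ∣ d1 := hd3 ▸ Nat.gcd_dvd_left d1 d2
  have hd32 : d3 ∣ d2 := hd3 ▸ Nat.gcd_dvd_right d1 d2
  have hd30 : d3 ≠ 0 := by rintro rfl; exact hd10 (zero_dvd_iff.mp hd31)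
  have hD : d1 * d2 / (d3 * d3) = (d1/d3) * (d2/d3) := by
    have h1 : d1 * d2 = (d3*d3) * ((d1/d3) * (d2/d3)) := by
      rw [show (d3*d3) * ((d1/d3) * (d2/d3)) = (d3*(d1/d3)) * (d3*(d2/d3)) by ring,
        Nat.mul_div_cancel' hd31, Nat.mul_div_cancel' hd32]
    rw [h1, Nat.mul_div_cancel_left _ (by positivity)]
  have hcop : Nat.Coprime (d1/d3) (d2/d3) := by
    rw [hd3]
    exact Nat.coprime_div_gcd_div_gcd (Nat.pos_of_ne_zero (by rw [← hd3]; exact hd30))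
  have hd1m : d1 ∣ m := by
    have := (hd1 ▸ Int.gcd_dvd_right k1 (m:ℤ) : ((d1:ℕ):ℤ) ∣ (m:ℤ))
    exact_mod_cast this
  have hd2m : d2 ∣ m := by
    have := (hd2 ▸ Int.gcd_dvd_right k2 (m:ℤ) : ((d2:ℕ):ℤ) ∣ (m:ℤ))
    exact_mod_cast this
  have hDm : (d1/d3) * (d2/d3) ∣ m :=
    Nat.Coprime.mul_dvd_of_dvd_of_dvd hcop
      (dvd_trans (Nat.div_dvd_of_dvd hd31) hd1m)
      (dvd_trans (Nat.div_dvd_of_dvd hd32) hd2m)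
  have hu' : unif m ((d1/d3) * (d2/d3)) A := hD ▸ hu
  have hU0 : (univ : Finset (ZMod m)).card ≠ 0 := by
    rw [Finset.card_univ, ZMod.card]; exact hm0
  have huU : unif m ((d1/d3) * (d2/d3)) (univ : Finset (ZMod m)) := by
    intro u
    rw [Finset.card_univ, ZMod.card]
    exact classCount m _ hDm u
  by_cases hex : ∃ x y : ZMod m, (k1:ZMod m)*x + (k2:ZMod m)*y = n
  · obtain ⟨x0, y0, hsol⟩ := hex
    have GA := sumFib m k1 k2 d2 d3 hd2 hd3' n x0 y0 hsol A hA0 _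
      (dvd_mul_left (d2/d3) (d1/d3)) hu'
    have G := sumFib m k1 k2 d2 d3 hd2 hd3' n x0 y0 hsol univ hU0 _
      (dvd_mul_left (d2/d3) (d1/d3)) huU
    have HA' := sumFib m k2 k1 d1 d3 hd1 hd3'' n y0 x0 (by linear_combination hsol) A hA0 _
      (dvd_mul_right (d1/d3) (d2/d3)) hu'
    have HA : (∑ b ∈ A, ((univ : Finset (ZMod m)).filter
        (fun a => (k1:ZMod m)*a + (k2:ZMod m)*b = n)).card) = d3 * A.card := by
      rw [← HA']
      apply Finset.sum_congr rfl
      intro b _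
      congr 1
      apply Finset.filter_congr
      intro a _
      constructor
      · intro h; linear_combination h
      · intro h; linear_combination h
    -- bookkeeping
    have hr1 : rhat m k1 k2 A n
        = ∑ a ∈ A, (A.filter (fun b => (k1:ZMod m)*a + (k2:ZMod m)*b = n)).card := by
      rw [rhat, Finset.card_filter, Finset.sum_product]
      exact Finset.sum_congr rfl (fun a _ => (Finset.card_filter _ _).symm)
    have hr2 : rhat m k1 k2 Aᶜ n
        = ∑ a ∈ Aᶜ, (Aᶜ.filter (fun b => (k1:ZMod m)*a + (k2:ZMod m)*b = n)).card := by
      rw [rhat, Finset.card_filter, Finset.sum_product]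
      exact Finset.sum_congr rfl (fun a _ => (Finset.card_filter _ _).symm)
    have hsplit : ∀ a : ZMod m,
        (A.filter (fun b => (k1:ZMod m)*a + (k2:ZMod m)*b = n)).card
        + (Aᶜ.filter (fun b => (k1:ZMod m)*a + (k2:ZMod m)*b = n)).card
        = ((univ : Finset (ZMod m)).filter (fun b => (k1:ZMod m)*a + (k2:ZMod m)*b = n)).card := by
      intro a
      rw [← Finset.card_union_of_disjoint (Finset.disjoint_filter_filter disjoint_compl_right),
        ← Finset.filter_union, Finset.union_compl]
    have hsum1 : (∑ a ∈ A, (A.filter (fun b => (k1:ZMod m)*a + (k2:ZMod m)*b = n)).card)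
        + (∑ a ∈ Aᶜ, (A.filter (fun b => (k1:ZMod m)*a + (k2:ZMod m)*b = n)).card)
        = ∑ a : ZMod m, (A.filter (fun b => (k1:ZMod m)*a + (k2:ZMod m)*b = n)).card :=
      Finset.sum_add_sum_compl A _
    have hsum2 : (∑ a ∈ A, ((univ : Finset (ZMod m)).filter
          (fun b => (k1:ZMod m)*a + (k2:ZMod m)*b = n)).card)
        + (∑ a ∈ Aᶜ, ((univ : Finset (ZMod m)).filter
          (fun b => (k1:ZMod m)*a + (k2:ZMod m)*b = n)).card)
        = ∑ a : ZMod m, ((univ : Finset (ZMod m)).filter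
          (fun b => (k1:ZMod m)*a + (k2:ZMod m)*b = n)).card :=
      Finset.sum_add_sum_compl A _
    have hswap : (∑ a : ZMod m, (A.filter (fun b => (k1:ZMod m)*a + (k2:ZMod m)*b = n)).card)
        = ∑ b ∈ A, ((univ : Finset (ZMod m)).filter
          (fun a => (k1:ZMod m)*a + (k2:ZMod m)*b = n)).card := by
      simp only [Finset.card_filter]
      exact Finset.sum_comm
    have hC : (∑ a ∈ Aᶜ, (A.filter (fun b => (k1:ZMod m)*a + (k2:ZMod m)*b = n)).card)
        + (∑ a ∈ Aᶜ, (Aᶜ.filter (fun b => (k1:ZMod m)*a + (k2:ZMod m)*b = n)).card)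
        = ∑ a ∈ Aᶜ, ((univ : Finset (ZMod m)).filter
          (fun b => (k1:ZMod m)*a + (k2:ZMod m)*b = n)).card := by
      rw [← Finset.sum_add_distrib]
      exact Finset.sum_congr rfl (fun a _ => hsplit a)
    have hG2 : d3 * (univ : Finset (ZMod m)).card = d3 * A.card + d3 * A.card := by
      have h0 : d3 * (2*A.card) = d3*A.card + d3*A.card := by ring
      rw [hA] at h0
      rw [Finset.card_univ, ZMod.card]
      exact h0
    omega
  · push_neg at hex
    have h1 : rhat m k1 k2 A n = 0 := by
      rw [rhat, Finset.card_eq_zero, Finset.filter_eq_empty_iff]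
      rintro ⟨x, y⟩ - h
      exact hex x y h
    have h2 : rhat m k1 k2 Aᶜ n = 0 := by
      rw [rhat, Finset.card_eq_zero, Finset.filter_eq_empty_iff]
      rintro ⟨x, y⟩ - h
      exact hex x y h
    rw [h1, h2]
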